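/- arXiv:1207.2982 — 6 statements merged into one kernel-verified Lean document; each statement's English description precedes it below -/
import Mathlib

section
/- Let g(x,q) = H(x) + G(q₁⁻, q₂⁺, q₃⁻, q₄⁺) with G(p) = |p|^β, β > 1. For all q, q̃ ∈ ℝ⁴, with p = (q₁⁻, q₂⁺, q₃⁻, q₄⁺) and p̃ = (q̃₁⁻, q̃₂⁺, q̃₃⁻, q̃₄⁺), one has g(x,q̃) − g(x,q) − g_q(x,q)·(q̃ − q) ≥ G(p̃) − G(p) − G_p(p)·(p̃ − p). -/
open Real Finset

/-- Euclidean norm on `ℝ⁴`. -/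
noncomputable def nrm (p : Fin 4 → ℝ) : ℝ := (∑ i, p i ^ 2) ^ ((1 : ℝ) / 2)

/-- Dot product on `ℝ⁴`. -/
def dot (p r : Fin 4 → ℝ) : ℝ := ∑ i, p i * r i

/-- `p = (q₁⁻, q₂⁺, q₃⁻, q₄⁺)`. -/
noncomputable def pvec (q : Fin 4 → ℝ) : Fin 4 → ℝ :=
  ![max (-(q 0)) 0, max (q 1) 0, max (-(q 2)) 0, max (q 3) 0]

/-- `G(p) = |p|^β`. -/
noncomputable def Gfun (β : ℝ) (p : Fin 4 → ℝ) : ℝ := nrm p ^ β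

/-- `G_p(p) · v = β |p|^(β-2) p · v`. -/
noncomputable def Gp (β : ℝ) (p v : Fin 4 → ℝ) : ℝ := β * nrm p ^ (β - 2) * dot p v

/-- The numerical Hamiltonian `g(x,q) = H(x) + G(q₁⁻, q₂⁺, q₃⁻, q₄⁺)`. -/
noncomputable def gfun (β : ℝ) (H : ℝ × ℝ → ℝ) (x : ℝ × ℝ) (q : Fin 4 → ℝ) : ℝ :=
  H x + Gfun β (pvec q)

/-- The gradient of `g` w.r.t. `q`, applied to `r`:
`g_q(x,q) · r = β |p|^(β-2) (−p₁ r₁ + p₂ r₂ − p₃ r₃ + p₄ r₄)` where `p = pvec q`. -/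
noncomputable def gq (β : ℝ) (q r : Fin 4 → ℝ) : ℝ :=
  β * nrm (pvec q) ^ (β - 2) *
    (-(pvec q 0) * r 0 + pvec q 1 * r 1 - pvec q 2 * r 2 + pvec q 3 * r 3)


lemma key_ineq (a b : ℝ) : max a 0 * (b - a) ≤ max a 0 * (max b 0 - max a 0) := by
  rcases le_or_gt a 0 with h | h
  · simp [max_eq_right h]
  · rw [max_eq_left h.le]
    have hb : b ≤ max b 0 := le_max_left _ _
    nlinarith

/-- Lemma 3.2: `g(x,qt) − g(x,q) − g_q(x,q)·(qt−q) ≥ G(pt) − G(p) − G_p(p)·(pt−p)`,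
where `p = pvec q` and `pt = pvec qt`. -/
theorem g_convexity_ge (β : ℝ) (hβ : 1 < β) (H : ℝ × ℝ → ℝ) (x : ℝ × ℝ)
    (q qt : Fin 4 → ℝ) :
    gfun β H x qt - gfun β H x q - gq β q (qt - q)
      ≥ Gfun β (pvec qt) - Gfun β (pvec q) - Gp β (pvec q) (pvec qt - pvec q) := by
  have hc : 0 ≤ β * nrm (pvec q) ^ (β - 2) := by
    apply mul_nonneg (by linarith)
    exact Real.rpow_nonneg (Real.rpow_nonneg (by positivity) _) _
  have hdot : (-(pvec q 0) * ((qt - q) 0) + pvec q 1 * ((qt - q) 1)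
      - pvec q 2 * ((qt - q) 2) + pvec q 3 * ((qt - q) 3))
      ≤ dot (pvec q) (pvec qt - pvec q) := by
    have h0 := key_ineq (-(q 0)) (-(qt 0))
    have h1 := key_ineq (q 1) (qt 1)
    have h2 := key_ineq (-(q 2)) (-(qt 2))
    have h3 := key_ineq (q 3) (qt 3)
    simp only [dot, Fin.sum_univ_four, pvec, Pi.sub_apply, Matrix.cons_val_zero,
      Matrix.cons_val_one, Matrix.head_cons, Matrix.cons_val_two, Matrix.tail_cons,
      Matrix.cons_val_three]
    nlinarith
  have hmain : gq β q (qt - q) ≤ Gp β (pvec q) (pvec qt - pvec q) := by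
    unfold gq Gp
    exact mul_le_mul_of_nonneg_left hdot hc
  simp only [gfun]
  linarith
end

section
/- With p = (q₁⁻,q₂⁺,q₃⁻,q₄⁺) and p̃ = (q̃₁⁻,q̃₂⁺,q̃₃⁻,q̃₄⁺), the inequality −g_q(x,q)·(q̃ − q) ≥ −β|p|^{β−2} p·(p̃ − p) = −G_p(p)·(p̃ − p) holds for all q, q̃ ∈ ℝ⁴. -/
open Real Finset

lemma neg_part_ineq (a b : ℝ) :
    max (-a) 0 * (max (-b) 0 - max (-a) 0) ≥ -(max (-a) 0) * (b - a) := by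
  rcases le_total a 0 with h | h <;> rcases le_total b 0 with h2 | h2 <;>
    simp only [max_eq_left, max_eq_right, neg_nonneg, neg_nonpos, h, h2] <;>
    nlinarith [le_max_left (-a) 0, le_max_right (-a) 0, le_max_left (-b) 0, le_max_right (-b) 0]

lemma pos_part_ineq (a b : ℝ) :
    max a 0 * (max b 0 - max a 0) ≥ max a 0 * (b - a) := by
  have := neg_part_ineq (-a) (-b)
  simp at this
  nlinarith [this]

/-- `−g_q(x,q)·(qt − q) ≥ −β|p|^(β−2) p·(pt − p) = −G_p(p)·(pt − p)` for all `q, qt ∈ ℝ⁴`,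
with `p = pvec q`, `pt = pvec qt`. -/
theorem neg_gq_ge (β : ℝ) (hβ : 1 < β) (q qt : Fin 4 → ℝ) :
    -gq β q (qt - q) ≥ -(β * nrm (pvec q) ^ (β - 2) * dot (pvec q) (pvec qt - pvec q)) ∧
    -(β * nrm (pvec q) ^ (β - 2) * dot (pvec q) (pvec qt - pvec q))
      = -Gp β (pvec q) (pvec qt - pvec q) := by
  refine ⟨?_, rfl⟩
  have hc : 0 ≤ β * nrm (pvec q) ^ (β - 2) := by
    have h1 : (0:ℝ) ≤ nrm (pvec q) := Real.rpow_nonneg (by positivity) _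
    have h2 : (0:ℝ) ≤ nrm (pvec q) ^ (β - 2) := Real.rpow_nonneg h1 _
    nlinarith
  have hsum : dot (pvec q) (pvec qt - pvec q) ≥
      -(pvec q 0) * (qt - q) 0 + pvec q 1 * (qt - q) 1
        - pvec q 2 * (qt - q) 2 + pvec q 3 * (qt - q) 3 := by
    have h0 := neg_part_ineq (q 0) (qt 0)
    have h1 := pos_part_ineq (q 1) (qt 1)
    have h2 := neg_part_ineq (q 2) (qt 2)
    have h3 := pos_part_ineq (q 3) (qt 3)
    simp only [dot, Fin.sum_univ_four, pvec, Pi.sub_apply, Matrix.cons_val_zero,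
      Matrix.cons_val_one, Matrix.head_cons, Matrix.cons_val_two, Matrix.tail_cons,
      Matrix.cons_val_three]
    linarith
  unfold gq
  have := mul_le_mul_of_nonneg_left hsum hc
  linarith
end

section
/- For β ≥ 2 and G(p) = |p|^β on ℝ⁴, for all p, p̃ ∈ (ℝ₊)⁴: G(p̃) − G(p) − G_p(p)·(p̃ − p) ≥ (1/(β−1)) · max(|p|^{β−2}, |p̃|^{β−2}) · |p − p̃|². -/
open Real Finset

lemma rpow_succ' {x : ℝ} (hx : 0 ≤ x) {y : ℝ} (hy : 0 ≤ y) : x ^ y * x = x ^ (y + 1) := by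
  rcases hx.eq_or_lt with h | h
  · subst h
    rw [Real.zero_rpow (by positivity : y + 1 ≠ 0), mul_zero]
  · rw [Real.rpow_add h y 1, Real.rpow_one]

/-- Case b ≥ a: strong version without 1/(β-1). -/
lemma lemI (β a b : ℝ) (hβ : 2 ≤ β) (ha : 0 ≤ a) (hab : a ≤ b) :
    b ^ β - a ^ β - β * a ^ (β - 1) * (b - a) ≥ b ^ (β - 2) * (b - a) ^ 2 := by
  rcases hβ.eq_or_lt with h2 | h2
  · subst h2
    simp only [Real.rpow_two, show (2:ℝ)-2 = 0 by norm_num, show (2:ℝ)-1 = 1 by norm_num, Real.rpow_zero, Real.rpow_one]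
    nlinarith [sq_nonneg (b - a)]
  rcases hab.eq_or_lt with h | h
  · subst h; simp
  set f : ℝ → ℝ := fun x => x ^ β - a ^ β - β * a ^ (β - 1) * (x - a) - x ^ (β - 2) * (x - a) ^ 2 with hf
  have hderiv : ∀ x ∈ Set.Ioo a b, HasDerivAt f
      (β * x ^ (β - 1) - β * a ^ (β - 1) -
        ((β - 2) * x ^ (β - 3) * (x - a) ^ 2 + x ^ (β - 2) * (2 * (x - a)))) x := by
    intro x hx
    have hx0 : x ≠ 0 := by
      have : 0 < x := lt_of_le_of_lt ha hx.1
      linarith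
    have h1 : HasDerivAt (fun x : ℝ => x ^ β) (β * x ^ (β - 1)) x :=
      Real.hasDerivAt_rpow_const (Or.inr (by linarith))
    have h4 : HasDerivAt (fun x : ℝ => x ^ (β - 2)) ((β - 2) * x ^ (β - 3)) x := by
      have := Real.hasDerivAt_rpow_const (x := x) (p := β - 2) (Or.inl hx0)
      convert this using 2
      ring_nf
    have h5 : HasDerivAt (fun x : ℝ => (x - a) ^ 2) (2 * (x - a)) x := by
      have : HasDerivAt (fun x : ℝ => (x - a) ^ 2) _ x := ((hasDerivAt_id x).sub_const a).fun_pow 2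
      convert this using 1
      simp
    have h3 : HasDerivAt (fun x : ℝ => β * a ^ (β - 1) * (x - a)) (β * a ^ (β - 1)) x := by
      have := ((hasDerivAt_id x).sub_const a).const_mul (β * a ^ (β - 1))
      simpa using this
    exact ((h1.sub_const (a ^ β)).sub h3).sub (h4.mul h5)
  have hmono : MonotoneOn f (Set.Icc a b) := by
    have c1 : ContinuousOn (fun x : ℝ => x ^ β) (Set.Icc a b) :=
      fun x _ => (Real.continuousAt_rpow_const x β (Or.inr (by linarith))).continuousWithinAt
    have c4 : ContinuousOn (fun x : ℝ => x ^ (β - 2)) (Set.Icc a b) :=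
      fun x _ => (Real.continuousAt_rpow_const x (β - 2) (Or.inr (by linarith))).continuousWithinAt
    apply monotoneOn_of_deriv_nonneg (convex_Icc a b)
    · exact ((c1.sub continuousOn_const).sub
        (continuousOn_const.mul (continuousOn_id.sub continuousOn_const))).sub
        (c4.mul ((continuousOn_id.sub continuousOn_const).pow 2))
    · rw [interior_Icc]
      intro x hx
      exact (hderiv x hx).differentiableAt.differentiableWithinAt
    · rw [interior_Icc]
      intro x hx
      rw [(hderiv x hx).deriv]
      have hx0 : 0 < x := lt_of_le_of_lt ha hx.1
      have hX : 0 ≤ x ^ (β - 3) := Real.rpow_nonneg hx0.le _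
      have e1 : x ^ (β - 3) * x = x ^ (β - 2) := by
        rw [show β - 2 = (β - 3) + 1 by ring, Real.rpow_add hx0, Real.rpow_one]
      have e2 : x ^ (β - 2) * x = x ^ (β - 1) := by
        rw [show β - 1 = (β - 2) + 1 by ring, Real.rpow_add hx0, Real.rpow_one]
      have haux : a ^ (β - 1) ≤ a * x ^ (β - 2) := by
        have h1 : a ^ (β - 2) ≤ x ^ (β - 2) := Real.rpow_le_rpow ha hx.1.le (by linarith)
        have h2 : a ^ (β - 2) * a = a ^ (β - 1) := by
          rw [rpow_succ' ha (by linarith : (0:ℝ) ≤ β - 2)]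
          congr 1
          ring
        nlinarith
      rw [← e2, ← e1]
      rw [← e1] at haux
      nlinarith [mul_nonneg (mul_nonneg hX ha) (mul_nonneg (by linarith : (0:ℝ) ≤ β - 2) (sub_nonneg.2 hx.1.le)), mul_le_mul_of_nonneg_left haux (by linarith : (0:ℝ) ≤ β)]
  have h0 : f a = 0 := by simp [hf]
  have := hmono (Set.left_mem_Icc.2 hab) (Set.right_mem_Icc.2 hab) hab
  rw [h0] at this
  simpa [hf, ge_iff_le, sub_nonneg] using this

/-- Case b ≤ a. -/
lemma lemII (β a b : ℝ) (hβ : 2 ≤ β) (hb : 0 ≤ b) (hab : b ≤ a) :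
    (β - 1) * (b ^ β - a ^ β - β * a ^ (β - 1) * (b - a)) ≥ a ^ (β - 2) * (b - a) ^ 2 := by
  rcases hβ.eq_or_lt with h2 | h2
  · subst h2
    simp only [Real.rpow_two, show (2:ℝ)-2 = 0 by norm_num, show (2:ℝ)-1 = 1 by norm_num, Real.rpow_zero, Real.rpow_one]
    nlinarith [sq_nonneg (b - a)]
  rcases hab.eq_or_lt with h | h
  · subst h; simp
  have ha : 0 ≤ a := hb.trans hab
  set k : ℝ → ℝ := fun x =>
    (β - 1) * (x ^ β - a ^ β - β * a ^ (β - 1) * (x - a)) - a ^ (β - 2) * (x - a) ^ 2 with hk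
  have hderiv : ∀ x : ℝ, HasDerivAt k
      ((β - 1) * (β * x ^ (β - 1) - β * a ^ (β - 1)) - a ^ (β - 2) * (2 * (x - a))) x := by
    intro x
    have h1 : HasDerivAt (fun x : ℝ => x ^ β) (β * x ^ (β - 1)) x :=
      Real.hasDerivAt_rpow_const (Or.inr (by linarith))
    have h5 : HasDerivAt (fun x : ℝ => (x - a) ^ 2) (2 * (x - a)) x := by
      have : HasDerivAt (fun x : ℝ => (x - a) ^ 2) _ x := ((hasDerivAt_id x).sub_const a).fun_pow 2
      convert this using 1
      simp
    have h3 : HasDerivAt (fun x : ℝ => β * a ^ (β - 1) * (x - a)) (β * a ^ (β - 1)) x := by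
      have := ((hasDerivAt_id x).sub_const a).const_mul (β * a ^ (β - 1))
      simpa using this
    exact (((h1.sub_const (a ^ β)).sub h3).const_mul (β - 1)).sub (h5.const_mul (a ^ (β - 2)))
  have hanti : AntitoneOn k (Set.Icc b a) := by
    apply antitoneOn_of_deriv_nonpos (convex_Icc b a)
    · exact fun x hx => ((hderiv x).differentiableAt.continuousAt).continuousWithinAt
    · exact fun x hx => (hderiv x).differentiableAt.differentiableWithinAt
    · rw [interior_Icc]
      intro x hx
      rw [(hderiv x).deriv]
      have hx0 : 0 ≤ x := le_trans hb hx.1.le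
      have hxa : x ≤ a := hx.2.le
      -- x^(β-1) ≤ a^(β-2) * x  and  a^(β-2) * a = a^(β-1)
      have e1 : a ^ (β - 2) * a = a ^ (β - 1) := by
        rw [rpow_succ' ha (by linarith : (0:ℝ) ≤ β - 2)]
        congr 1
        ring
      have e2 : x ^ (β - 1) ≤ a ^ (β - 2) * x := by
        have h1 : x ^ (β - 2) ≤ a ^ (β - 2) := Real.rpow_le_rpow hx0 hxa (by linarith)
        rcases hx0.eq_or_lt with h0 | h0
        · rw [← h0, Real.zero_rpow (by intro hc; rw [sub_eq_zero] at hc; linarith)]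
          simp
        · have : x ^ (β - 2) * x = x ^ (β - 1) := by
            rw [rpow_succ' hx0 (by linarith : (0:ℝ) ≤ β - 2)]
            congr 1
            ring
          nlinarith
      have hA : 0 ≤ a ^ (β - 2) := Real.rpow_nonneg ha _
      -- goal: (β-1)*(β*x^(β-1) - β*a^(β-1)) - a^(β-2)*(2*(x-a)) ≤ 0
      rw [← e1]
      nlinarith [mul_le_mul_of_nonneg_left e2 (by nlinarith : (0:ℝ) ≤ β * (β - 1)),
        mul_nonneg (mul_nonneg hA (sub_nonneg.2 hxa)) (by nlinarith : (0:ℝ) ≤ β * (β - 1) - 2)]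
  have h0 : k a = 0 := by simp [hk]
  have := hanti (Set.left_mem_Icc.2 hab) (Set.right_mem_Icc.2 hab) hab
  rw [h0] at this
  simpa [hk, ge_iff_le, sub_nonneg] using this



lemma amgm (β x y : ℝ) (hβ : 2 ≤ β) (hx : 0 ≤ x) (hy : 0 ≤ y) :
    x ^ 2 * y ^ (β - 2) ≤ x ^ β + (β - 2) * y ^ β := by
  have hβ0 : (0:ℝ) < β := by linarith
  have e1 : (x ^ β) ^ (2 / β) = x ^ 2 := by
    rw [← Real.rpow_mul hx]
    rw [show β * (2 / β) = ((2:ℕ):ℝ) by push_cast; field_simp]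
    exact Real.rpow_natCast x 2
  have e2 : (y ^ β) ^ ((β - 2) / β) = y ^ (β - 2) := by
    rw [← Real.rpow_mul hy]
    congr 1
    field_simp
  have hg := Real.geom_mean_le_arith_mean2_weighted (w₁ := 2 / β) (w₂ := (β - 2) / β)
    (p₁ := x ^ β) (p₂ := y ^ β) (by positivity) (div_nonneg (by linarith) (by linarith))
    (Real.rpow_nonneg hx β) (Real.rpow_nonneg hy β) (by field_simp; ring)
  rw [e1, e2] at hg
  have d1 : 2 / β * x ^ β ≤ x ^ β := by
    have : 2 / β ≤ 1 := by rw [div_le_one hβ0]; linarith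
    nlinarith [Real.rpow_nonneg hx β]
  have d2 : (β - 2) / β * y ^ β ≤ (β - 2) * y ^ β := by
    have : (β - 2) / β ≤ β - 2 := div_le_self (by linarith) (by linarith)
    nlinarith [Real.rpow_nonneg hy β]
  linarith

lemma key (β a b t : ℝ) (hβ : 2 ≤ β) (ha : 0 ≤ a) (hb : 0 ≤ b) (ht : 0 ≤ t)
    (htab : t ≤ a * b) :
    max (a ^ (β - 2)) (b ^ (β - 2)) * (a ^ 2 + b ^ 2 - 2 * t)
      ≤ (β - 1) * (b ^ β - a ^ β - β * a ^ (β - 2) * (t - a ^ 2)) := by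
  set M := max (a ^ (β - 2)) (b ^ (β - 2)) with hMdef
  have hc : (1:ℝ) ≤ β - 1 := by linarith
  have ea1 : a ^ (β - 2) * a = a ^ (β - 1) := by
    rw [rpow_succ' ha (by linarith : (0:ℝ) ≤ β - 2)]; congr 1; ring
  have ea2 : a ^ (β - 1) * a = a ^ β := by
    rw [rpow_succ' ha (by linarith : (0:ℝ) ≤ β - 1)]; congr 1; ring
  have ea3 : a ^ (β - 2) * a ^ 2 = a ^ β := by
    rw [sq, ← mul_assoc, ea1, ea2]
  have eb3 : b ^ (β - 2) * b ^ 2 = b ^ β := by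
    rw [sq, ← mul_assoc, rpow_succ' hb (by linarith : (0:ℝ) ≤ β - 2),
      show β - 2 + 1 = β - 1 by ring, rpow_succ' hb (by linarith : (0:ℝ) ≤ β - 1),
      show β - 1 + 1 = β by ring]
  have hA : 0 ≤ a ^ β := Real.rpow_nonneg ha β
  have hB : 0 ≤ b ^ β := Real.rpow_nonneg hb β
  have hP : 0 ≤ a ^ (β - 2) := Real.rpow_nonneg ha _
  have hQ : 0 ≤ b ^ (β - 2) := Real.rpow_nonneg hb _
  have hE0 : M * (a ^ 2 + b ^ 2) ≤ (β - 1) * (b ^ β - a ^ β + β * (a ^ (β - 2) * a ^ 2)) := by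
    rw [ea3]
    rcases le_total a b with hab | hab
    · rw [hMdef, max_eq_right (Real.rpow_le_rpow ha hab (by linarith))]
      have am := amgm β a b hβ ha hb
      nlinarith [eb3, mul_nonneg (mul_nonneg (by linarith : (0:ℝ) ≤ β) (by linarith : (0:ℝ) ≤ β - 2)) hA]
    · rw [hMdef, max_eq_left (Real.rpow_le_rpow hb hab (by linarith))]
      have am := amgm β b a hβ hb ha
      nlinarith [ea3, mul_nonneg (by linarith : (0:ℝ) ≤ β - 2) hB,
        mul_nonneg (mul_nonneg (by linarith : (0:ℝ) ≤ β - 1) (by linarith : (0:ℝ) ≤ β - 2)) hA]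
  have hEab : M * (a ^ 2 + b ^ 2 - 2 * (a * b))
      ≤ (β - 1) * (b ^ β - a ^ β - β * (a ^ (β - 2) * (a * b - a ^ 2))) := by
    have e : a ^ (β - 2) * (a * b - a ^ 2) = a ^ (β - 1) * (b - a) := by
      rw [← ea1]; ring
    rw [e]
    rcases le_total a b with hab | hab
    · rw [hMdef, max_eq_right (Real.rpow_le_rpow ha hab (by linarith))]
      have I := lemI β a b hβ ha hab
      nlinarith [mul_nonneg hQ (sq_nonneg (b - a))]
    · rw [hMdef, max_eq_left (Real.rpow_le_rpow hb hab (by linarith))]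
      have I := lemII β a b hβ hb hab
      nlinarith
  rcases le_or_gt 0 (2 * M - (β - 1) * (β * a ^ (β - 2))) with hs | hs
  · nlinarith [mul_nonneg ht hs, ea3]
  · have h1 : (a * b) * (2 * M - (β - 1) * (β * a ^ (β - 2)))
        ≤ t * (2 * M - (β - 1) * (β * a ^ (β - 2))) :=
      mul_le_mul_of_nonpos_right htab hs.le
    nlinarith [hEab, h1, ea3]

lemma nrm_sq (v : Fin 4 → ℝ) : nrm v ^ 2 = ∑ i, v i ^ 2 := by
  have h : (0:ℝ) ≤ ∑ i, v i ^ 2 := Finset.sum_nonneg fun i _ => sq_nonneg _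
  rw [nrm, ← Real.rpow_natCast ((∑ i, v i ^ 2) ^ ((1:ℝ)/2)) 2, ← Real.rpow_mul h]
  norm_num

/-- For `β ≥ 2` and `p, pt ∈ (ℝ₊)⁴`:
`G(pt) − G(p) − G_p(p)·(pt − p) ≥ (1/(β−1)) max(|p|^(β−2), |pt|^(β−2)) |p − pt|²`. -/
theorem G_strong_convexity (β : ℝ) (hβ : 2 ≤ β) (p pt : Fin 4 → ℝ)
    (hp : ∀ i, 0 ≤ p i) (hpt : ∀ i, 0 ≤ pt i) :
    Gfun β pt - Gfun β p - Gp β p (pt - p)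
      ≥ 1 / (β - 1) * max (nrm p ^ (β - 2)) (nrm pt ^ (β - 2)) * nrm (p - pt) ^ 2 := by
  have hS : (0:ℝ) ≤ ∑ i, p i ^ 2 := Finset.sum_nonneg fun i _ => sq_nonneg _
  have hS' : (0:ℝ) ≤ ∑ i, pt i ^ 2 := Finset.sum_nonneg fun i _ => sq_nonneg _
  have ha : 0 ≤ nrm p := Real.rpow_nonneg hS _
  have hb : 0 ≤ nrm pt := Real.rpow_nonneg hS' _
  have ha2 : nrm p ^ 2 = ∑ i, p i ^ 2 := nrm_sq p
  have hb2 : nrm pt ^ 2 = ∑ i, pt i ^ 2 := nrm_sq pt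
  have ht : 0 ≤ dot p pt :=
    Finset.sum_nonneg fun i _ => mul_nonneg (hp i) (hpt i)
  have hCS2 : dot p pt ^ 2 ≤ (∑ i, p i ^ 2) * (∑ i, pt i ^ 2) := by
    simp only [dot, Fin.sum_univ_four]
    nlinarith [sq_nonneg (p 0 * pt 1 - p 1 * pt 0), sq_nonneg (p 0 * pt 2 - p 2 * pt 0),
      sq_nonneg (p 0 * pt 3 - p 3 * pt 0), sq_nonneg (p 1 * pt 2 - p 2 * pt 1),
      sq_nonneg (p 1 * pt 3 - p 3 * pt 1), sq_nonneg (p 2 * pt 3 - p 3 * pt 2)]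
  have htab : dot p pt ≤ nrm p * nrm pt := by
    nlinarith [hCS2, mul_nonneg ha hb, ha2, hb2]
  have hdot : dot p (pt - p) = dot p pt - nrm p ^ 2 := by
    rw [ha2]
    simp only [dot, Pi.sub_apply, Fin.sum_univ_four]
    ring
  have hnd : nrm (p - pt) ^ 2 = nrm p ^ 2 + nrm pt ^ 2 - 2 * dot p pt := by
    rw [nrm_sq, ha2, hb2]
    simp only [dot, Pi.sub_apply, Fin.sum_univ_four]
    ring
  have K := key β (nrm p) (nrm pt) (dot p pt) hβ ha hb ht htab
  rw [ge_iff_le, Gfun, Gfun, Gp, hdot, hnd]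
  have hβ1 : (0:ℝ) < β - 1 := by linarith
  calc 1 / (β - 1) * max (nrm p ^ (β - 2)) (nrm pt ^ (β - 2)) *
        (nrm p ^ 2 + nrm pt ^ 2 - 2 * dot p pt)
      = (max (nrm p ^ (β - 2)) (nrm pt ^ (β - 2)) *
          (nrm p ^ 2 + nrm pt ^ 2 - 2 * dot p pt)) / (β - 1) := by ring
    _ ≤ ((β - 1) * (nrm pt ^ β - nrm p ^ β -
          β * nrm p ^ (β - 2) * (dot p pt - nrm p ^ 2))) / (β - 1) := by
        exact div_le_div_of_nonneg_right K hβ1.le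
    _ = nrm pt ^ β - nrm p ^ β - β * nrm p ^ (β - 2) * (dot p pt - nrm p ^ 2) := by
        field_simp
end

section
/- For 1 < β < 2 and G(p) = |p|^β on ℝ⁴, for all p, p̃ ∈ (ℝ₊)⁴ with p + p̃ ≠ 0: G(p̃) − G(p) − G_p(p)·(p̃ − p) ≥ 2^{β−3} β(β−1) min(|p|_∞^{β−2}, |p̃|_∞^{β−2}) |p − p̃|², where |·|_∞ is the max norm. -/
open Real Finset

/-- The max norm `|p|_∞` on `ℝ⁴`. -/
def nrmInf (p : Fin 4 → ℝ) : ℝ := max (max |p 0| |p 1|) (max |p 2| |p 3|)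

lemma abs_le_nrmInf (p : Fin 4 → ℝ) (i : Fin 4) : |p i| ≤ nrmInf p := by
  unfold nrmInf
  fin_cases i
  · exact le_max_of_le_left (le_max_left _ _)
  · exact le_max_of_le_left (le_max_right _ _)
  · exact le_max_of_le_right (le_max_left _ _)
  · exact le_max_of_le_right (le_max_right _ _)

lemma nrmInf_nonneg (p : Fin 4 → ℝ) : 0 ≤ nrmInf p :=
  (abs_nonneg _).trans (abs_le_nrmInf p 0)

/-- Abstract Hessian lower bound inequality. -/
lemma quad_aux (β q x L C : ℝ) (hβ1 : 1 < β) (hβ2 : β < 2) (hx : 0 < x) (hC : 0 ≤ C)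
    (hL2 : L^2 ≤ 4*(q*C)) :
    β*(β-1) * (x * q) * C ≤ β/2 * ((L * (β/2-1) * x) * L + (x * q) * (2*C)) := by
  have key : 0 ≤ (β/2)*(1-β/2) * (x * (4*(q*C) - L^2)) := by
    apply mul_nonneg
    · nlinarith
    · exact mul_nonneg hx.le (by linarith)
  nlinarith [key]

/-- Second-order Taylor lower bound on `[0,1]`. -/
lemma taylor_aux {f f' f'' : ℝ → ℝ} {c : ℝ}
    (hf : ∀ s ∈ Set.Icc (0:ℝ) 1, HasDerivAt f (f' s) s)
    (hf' : ∀ s ∈ Set.Icc (0:ℝ) 1, HasDerivAt f' (f'' s) s)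
    (hc : ∀ s ∈ Set.Icc (0:ℝ) 1, c ≤ f'' s) :
    f 0 + f' 0 + c / 2 ≤ f 1 := by
  have hIcc : Convex ℝ (Set.Icc (0:ℝ) 1) := convex_Icc 0 1
  have hint : interior (Set.Icc (0:ℝ) 1) = Set.Ioo 0 1 := interior_Icc
  have h0m : (0:ℝ) ∈ Set.Icc (0:ℝ) 1 := by constructor <;> norm_num
  have h1m : (1:ℝ) ∈ Set.Icc (0:ℝ) 1 := by constructor <;> norm_num
  -- g = f' - c • id is monotone
  have hgd : ∀ s ∈ Set.Icc (0:ℝ) 1,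
      HasDerivAt (fun x => f' x - c * x) (f'' s - c) s := by
    intro s hs
    have H := (hf' s hs).sub ((hasDerivAt_id s).const_mul c)
    rw [mul_one] at H
    exact H
  have hgmono : MonotoneOn (fun x => f' x - c * x) (Set.Icc 0 1) := by
    apply monotoneOn_of_deriv_nonneg hIcc
    · exact fun s hs => (hgd s hs).continuousAt.continuousWithinAt
    · rw [hint]
      exact fun s hs =>
        ((hgd s (Set.Ioo_subset_Icc_self hs)).differentiableAt).differentiableWithinAt
    · intro s hs
      rw [hint] at hs
      rw [(hgd s (Set.Ioo_subset_Icc_self hs)).deriv]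
      have := hc s (Set.Ioo_subset_Icc_self hs)
      linarith
  have hf'lb : ∀ s ∈ Set.Icc (0:ℝ) 1, f' 0 + c * s ≤ f' s := by
    intro s hs
    have := hgmono h0m hs hs.1
    simp only [mul_zero, sub_zero] at this
    linarith
  -- h = f - f' 0 • id - c/2 • id² is monotone
  have hhd : ∀ s ∈ Set.Icc (0:ℝ) 1,
      HasDerivAt (fun x => f x - f' 0 * x - c / 2 * (x * x)) (f' s - f' 0 - c * s) s := by
    intro s hs
    have H := ((hf s hs).sub ((hasDerivAt_id s).const_mul (f' 0))).sub
      (((hasDerivAt_id s).mul (hasDerivAt_id s)).const_mul (c / 2))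
    have heq : f' s - f' 0 - c * s = f' s - f' 0 * 1 - c / 2 * (1 * s + s * 1) := by ring
    rw [heq]
    exact H
  have hhmono : MonotoneOn (fun x => f x - f' 0 * x - c / 2 * (x * x)) (Set.Icc 0 1) := by
    apply monotoneOn_of_deriv_nonneg hIcc
    · exact fun s hs => (hhd s hs).continuousAt.continuousWithinAt
    · rw [hint]
      exact fun s hs =>
        ((hhd s (Set.Ioo_subset_Icc_self hs)).differentiableAt).differentiableWithinAt
    · intro s hs
      rw [hint] at hs
      rw [(hhd s (Set.Ioo_subset_Icc_self hs)).deriv]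
      have := hf'lb s (Set.Ioo_subset_Icc_self hs)
      linarith
  have := hhmono h0m h1m (by norm_num)
  simp only [mul_zero, mul_one, sub_zero] at this
  linarith

set_option maxHeartbeats 2000000 in
/-- For `1 < β < 2` and `p, pt ∈ (ℝ₊)⁴` with `p + pt ≠ 0`:
`G(pt) − G(p) − G_p(p)·(pt − p) ≥ 2^(β−3) β(β−1) min(|p|_∞^(β−2), |pt|_∞^(β−2)) |p − pt|²`. -/
theorem G_strong_convexity_lt_two (β : ℝ) (hβ₁ : 1 < β) (hβ₂ : β < 2) (p pt : Fin 4 → ℝ)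
    (hp : ∀ i, 0 ≤ p i) (hpt : ∀ i, 0 ≤ pt i) (hne : p + pt ≠ 0) :
    Gfun β pt - Gfun β p - Gp β p (pt - p)
      ≥ (2 : ℝ) ^ (β - 3) * β * (β - 1) *
          min (nrmInf p ^ (β - 2)) (nrmInf pt ^ (β - 2)) * nrm (p - pt) ^ 2 := by
  have hβ0 : (0:ℝ) < β := by linarith
  have hsumnn : ∀ r : Fin 4 → ℝ, (0:ℝ) ≤ ∑ i, r i ^ 2 :=
    fun r => Finset.sum_nonneg fun i _ => sq_nonneg _
  have hnrm_nonneg : ∀ r : Fin 4 → ℝ, 0 ≤ nrm r := fun r => Real.rpow_nonneg (hsumnn r) _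
  have hnrm0 : nrm (0 : Fin 4 → ℝ) = 0 := by
    unfold nrm
    simp only [Pi.zero_apply]
    rw [show (∑ _i : Fin 4, (0:ℝ) ^ 2) = 0 by simp]
    exact Real.zero_rpow (by norm_num)
  have hnrmInf0 : nrmInf (0 : Fin 4 → ℝ) = 0 := by
    unfold nrmInf; simp
  by_cases hp0 : p = 0
  · subst hp0
    have h1 : Gfun β (0 : Fin 4 → ℝ) = 0 := by
      unfold Gfun; rw [hnrm0]; exact Real.zero_rpow (by linarith)
    have h2 : Gp β (0 : Fin 4 → ℝ) (pt - 0) = 0 := by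
      unfold Gp dot; simp
    have h3 : min (nrmInf (0 : Fin 4 → ℝ) ^ (β - 2)) (nrmInf pt ^ (β - 2)) = 0 := by
      rw [hnrmInf0, Real.zero_rpow (by linarith)]
      exact min_eq_left (Real.rpow_nonneg (nrmInf_nonneg pt) _)
    rw [h1, h2, h3]
    have h4 : 0 ≤ Gfun β pt := Real.rpow_nonneg (hnrm_nonneg pt) _
    simp only [mul_zero, zero_mul]
    linarith
  by_cases hpt0 : pt = 0
  · subst hpt0
    have hpne : p ≠ 0 := by simpa using hne
    obtain ⟨j, hj⟩ : ∃ j, p j ≠ 0 := Function.ne_iff.mp (by exact hpne)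
    have hpj : 0 < p j := lt_of_le_of_ne (hp j) (Ne.symm hj)
    set A := ∑ i, p i ^ 2 with hA
    have hApos : 0 < A := by
      rw [hA]
      apply Finset.sum_pos' (fun i _ => sq_nonneg _)
      exact ⟨j, Finset.mem_univ _, by positivity⟩
    have hhalf : ∀ b : ℝ, (A ^ ((1:ℝ)/2)) ^ b = A ^ (b/2) := by
      intro b
      rw [← Real.rpow_mul hApos.le]
      congr 1; ring
    have h1 : Gfun β (0 : Fin 4 → ℝ) = 0 := by
      unfold Gfun; rw [hnrm0]; exact Real.zero_rpow (by linarith)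
    have hnrmp : ∀ b : ℝ, nrm p ^ b = A ^ (b/2) := by
      intro b; unfold nrm; rw [← hA, hhalf]
    have hdot : dot p ((0 : Fin 4 → ℝ) - p) = -A := by
      unfold dot
      rw [hA, ← Finset.sum_neg_distrib]
      apply Finset.sum_congr rfl
      intro i _
      simp [sq]
    have h2 : Gp β p ((0 : Fin 4 → ℝ) - p) = -(β * A ^ (β/2)) := by
      unfold Gp
      rw [hdot, hnrmp]
      have : A ^ ((β-2)/2) * A = A ^ (β/2) := by
        rw [← Real.rpow_add_one hApos.ne']
        congr 1; ring
      nlinarith [this]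
    have h3 : min (nrmInf p ^ (β - 2)) (nrmInf (0 : Fin 4 → ℝ) ^ (β - 2)) = 0 := by
      rw [hnrmInf0, Real.zero_rpow (by linarith)]
      exact min_eq_right (Real.rpow_nonneg (nrmInf_nonneg p) _)
    rw [h1, h2, h3]
    have h4 : Gfun β p = A ^ (β/2) := hnrmp β
    have h5 : 0 ≤ A ^ (β/2) := Real.rpow_nonneg hApos.le _
    rw [h4]
    simp only [mul_zero, zero_mul]
    nlinarith [h5]
  · -- main case: p ≠ 0 and pt ≠ 0
    obtain ⟨j, hj⟩ : ∃ j, p j ≠ 0 := Function.ne_iff.mp (by exact hp0)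
    obtain ⟨k, hk⟩ : ∃ k, pt k ≠ 0 := Function.ne_iff.mp (by exact hpt0)
    have hpj : 0 < p j := lt_of_le_of_ne (hp j) (Ne.symm hj)
    have hptk : 0 < pt k := lt_of_le_of_ne (hpt k) (Ne.symm hk)
    have haInf : 0 < nrmInf p := lt_of_lt_of_le (abs_pos.mpr hj) (abs_le_nrmInf p j)
    have hbInf : 0 < nrmInf pt := lt_of_lt_of_le (abs_pos.mpr hk) (abs_le_nrmInf pt k)
    set A := ∑ i, p i ^ 2 with hA
    set B := ∑ i, p i * (pt i - p i) with hB
    set C := ∑ i, (pt i - p i) ^ 2 with hC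
    set M := max (nrmInf p) (nrmInf pt) with hM
    have hMpos : 0 < M := lt_max_of_lt_left haInf
    have hCnn : 0 ≤ C := Finset.sum_nonneg fun i _ => sq_nonneg _
    have hpM : nrmInf p ≤ M := le_max_left _ _
    have hptM : nrmInf pt ≤ M := le_max_right _ _
    clear_value A B C M
    set Q : ℝ → ℝ := fun s => A + 2*B*s + C*s^2 with hQdef
    clear_value Q
    have hQsum : ∀ s : ℝ, Q s = ∑ i, (p i + s * (pt i - p i))^2 := by
      intro s
      have hexp : ∀ i, (p i + s*(pt i - p i))^2
          = p i^2 + (2*s)*(p i * (pt i - p i)) + s^2 * (pt i - p i)^2 := fun i => by ring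
      simp only [hQdef, hA, hB, hC, hexp, Finset.sum_add_distrib, ← Finset.mul_sum]
      ring
    have hQpos : ∀ s ∈ Set.Icc (0:ℝ) 1, 0 < Q s := by
      intro s hs
      rw [hQsum]
      apply Finset.sum_pos' (fun i _ => sq_nonneg _)
      rcases lt_or_eq_of_le hs.2 with h1 | h1
      · refine ⟨j, Finset.mem_univ _, ?_⟩
        have : 0 < p j + s * (pt j - p j) := by nlinarith [hpt j, hs.1]
        positivity
      · refine ⟨k, Finset.mem_univ _, ?_⟩
        have : 0 < p k + s * (pt k - p k) := by
          rw [h1]; simpa using hptk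
        positivity
    have hQub : ∀ s ∈ Set.Icc (0:ℝ) 1, Q s ≤ 4 * M^2 := by
      intro s hs
      rw [hQsum]
      have hb : ∀ i, (p i + s*(pt i - p i))^2 ≤ M^2 := by
        intro i
        have hle1 : 0 ≤ p i + s*(pt i - p i) := by nlinarith [hp i, hpt i, hs.1, hs.2]
        have hpi : p i ≤ M := le_trans (le_trans (le_abs_self _) (abs_le_nrmInf p i)) hpM
        have hpti : pt i ≤ M := le_trans (le_trans (le_abs_self _) (abs_le_nrmInf pt i)) hptM
        have hle2 : p i + s*(pt i - p i) ≤ M := by nlinarith [hs.1, hs.2]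
        nlinarith
      calc (∑ i, (p i + s*(pt i - p i))^2) ≤ ∑ _i : Fin 4, M^2 :=
            Finset.sum_le_sum (fun i _ => hb i)
        _ = 4 * M^2 := by
            rw [Finset.sum_const]
            simp
    have hCS : ∀ s : ℝ, (B + C * s)^2 ≤ Q s * C := by
      intro s
      have h1 : B + C*s = ∑ i, (p i + s*(pt i - p i)) * (pt i - p i) := by
        have hexp : ∀ i, (p i + s*(pt i - p i)) * (pt i - p i)
            = p i * (pt i - p i) + s * (pt i - p i)^2 := fun i => by ring
        simp only [hB, hC, hexp, Finset.sum_add_distrib, ← Finset.mul_sum]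
        ring
      calc (B + C*s)^2 = (∑ i, (p i + s*(pt i - p i)) * (pt i - p i))^2 := by rw [h1]
        _ ≤ (∑ i, (p i + s*(pt i - p i))^2) * (∑ i, (pt i - p i)^2) :=
            Finset.sum_mul_sq_le_sq_mul_sq _ _ _
        _ = Q s * C := by rw [hQsum s, hC]
    have hQder : ∀ s : ℝ, HasDerivAt Q (2*B + 2*C*s) s := by
      intro s
      have h1 : HasDerivAt (fun x : ℝ => A + 2*B*x + C*x^2)
          (0 + 2*B*1 + C*((2:ℕ) * s^(2-1))) s :=
        (((hasDerivAt_const s A).add ((hasDerivAt_id s).const_mul (2*B)))).add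
          ((hasDerivAt_pow 2 s).const_mul C)
      have heq : 2*B + 2*C*s = 0 + 2*B*1 + C*((2:ℕ) * s^(2-1)) := by
        push_cast
        ring
      rw [hQdef, heq]
      exact h1
    set φ : ℝ → ℝ := fun s => Q s ^ (β/2) with hφdef
    set φ' : ℝ → ℝ := fun s => (2*B + 2*C*s) * (β/2) * Q s ^ (β/2 - 1) with hφ'def
    set φ'' : ℝ → ℝ := fun s =>
      β/2 * (((2*B+2*C*s) * (β/2-1) * Q s ^ (β/2-1-1)) * (2*B+2*C*s) + Q s ^ (β/2-1) * (2*C))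
      with hφ''def
    clear_value φ φ' φ''
    have hφd : ∀ s ∈ Set.Icc (0:ℝ) 1, HasDerivAt φ (φ' s) s := by
      intro s hs
      simp only [hφdef, hφ'def]
      exact (hQder s).rpow_const (Or.inl (hQpos s hs).ne')
    have hφ'd : ∀ s ∈ Set.Icc (0:ℝ) 1, HasDerivAt φ' (φ'' s) s := by
      intro s hs
      have h1 : HasDerivAt (fun t => Q t ^ (β/2-1))
          ((2*B+2*C*s) * (β/2-1) * Q s ^ (β/2-1-1)) s :=
        (hQder s).rpow_const (Or.inl (hQpos s hs).ne')
      have h2 : HasDerivAt (fun t : ℝ => 2*B + 2*C*t) (2*C) s := by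
        simpa using ((hasDerivAt_id s).const_mul (2*C)).const_add (2*B)
      have h3 := (h1.mul h2).const_mul (β/2)
      have hfe : φ' = fun t => β/2 * (Q t ^ (β/2-1) * (2*B+2*C*t)) := by
        funext t; simp only [hφ'def]; ring
      rw [hfe]
      simp only [hφ''def]
      exact h3
    set c : ℝ := β*(β-1) * ((2*M) ^ (β-2)) * C with hcdef
    clear_value c
    have h2M : (0:ℝ) < 2*M := by linarith
    have hcle : ∀ s ∈ Set.Icc (0:ℝ) 1, c ≤ φ'' s := by
      intro s hs
      have hq : 0 < Q s := hQpos s hs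
      have hx : 0 < Q s ^ (β/2-1-1) := Real.rpow_pos_of_pos hq _
      have he1 : Q s ^ (β/2-1-1) * Q s = Q s ^ (β/2-1) := by
        rw [← Real.rpow_add_one hq.ne']
        congr 1; ring
      have hL2 : (2*B+2*C*s)^2 ≤ 4 * (Q s * C) := by nlinarith [hCS s]
      have hstep : β*(β-1) * Q s ^ (β/2-1) * C ≤ φ'' s := by
        simp only [hφ''def]
        rw [← he1]
        exact quad_aux β (Q s) (Q s ^ (β/2-1-1)) (2*B+2*C*s) C hβ₁ hβ₂ hx hCnn hL2
      have hq2 : Q s ≤ (2*M)^(2:ℕ) := by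
        have := hQub s hs; nlinarith
      have hkey : (2*M) ^ (β-2) = ((2*M)^(2:ℕ) : ℝ) ^ (β/2-1) := by
        rw [← Real.rpow_natCast (2*M) 2, ← Real.rpow_mul h2M.le]
        congr 1; push_cast; ring
      have h6 : (2*M) ^ (β-2) ≤ Q s ^ (β/2-1) := by
        rw [hkey]
        exact Real.rpow_le_rpow_of_nonpos hq hq2 (by linarith)
      have h7 : 0 ≤ β*(β-1)*C := mul_nonneg (by nlinarith) hCnn
      calc c = β*(β-1)*C * ((2*M) ^ (β-2)) := by rw [hcdef]; ring
        _ ≤ β*(β-1)*C * (Q s ^ (β/2-1)) := mul_le_mul_of_nonneg_left h6 h7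
        _ = β*(β-1) * Q s ^ (β/2-1) * C := by ring
        _ ≤ φ'' s := hstep
    have htay := taylor_aux hφd hφ'd hcle
    -- translation back
    have hApos : 0 < A := by
      rw [hA]
      apply Finset.sum_pos' (fun i _ => sq_nonneg _)
      exact ⟨j, Finset.mem_univ _, by positivity⟩
    have hhalf : ∀ (x b : ℝ), 0 ≤ x → (x ^ ((1:ℝ)/2)) ^ b = x ^ (b/2) := by
      intro x b hx
      rw [← Real.rpow_mul hx]
      congr 1; ring
    have hQ0 : Q 0 = A := by simp [hQdef]
    have hQ1 : Q 1 = ∑ i, pt i ^ 2 := by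
      rw [hQsum]
      apply Finset.sum_congr rfl
      intro i _
      ring
    have hGpt : Gfun β pt = φ 1 := by
      simp only [hφdef, hQ1]
      unfold Gfun nrm
      rw [hhalf _ _ (hsumnn pt)]
    have hGp : Gfun β p = φ 0 := by
      simp only [hφdef, hQ0]
      unfold Gfun nrm
      rw [← hA, hhalf _ _ hApos.le]
    have hdot : dot p (pt - p) = B := by
      unfold dot
      rw [hB]
      apply Finset.sum_congr rfl
      intro i _
      simp
    have hGpd : Gp β p (pt - p) = φ' 0 := by
      unfold Gp
      rw [hdot]
      simp only [hφ'def]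
      unfold nrm
      rw [← hA, hhalf _ _ hApos.le, hQ0]
      have : (β-2)/2 = β/2 - 1 := by ring
      rw [this]
      ring
    -- RHS = c / 2
    have hminM : min (nrmInf p ^ (β - 2)) (nrmInf pt ^ (β - 2)) = M ^ (β-2) := by
      rcases le_total (nrmInf p) (nrmInf pt) with h | h
      · rw [hM, max_eq_right h, min_eq_right (Real.rpow_le_rpow_of_nonpos haInf h (by linarith))]
      · rw [hM, max_eq_left h, min_eq_left (Real.rpow_le_rpow_of_nonpos hbInf h (by linarith))]
    have hnC : nrm (p - pt) ^ 2 = C := by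
      unfold nrm
      have hsum : ∑ i, (p - pt) i ^ 2 = C := by
        rw [hC]
        apply Finset.sum_congr rfl
        intro i _
        simp
        ring
      rw [hsum, ← Real.rpow_natCast (C ^ ((1:ℝ)/2)) 2, ← Real.rpow_mul hCnn]
      norm_num
    have h2Mr : (2*M) ^ (β-2) = 2 ^ (β-2) * M ^ (β-2) :=
      Real.mul_rpow (by norm_num) hMpos.le
    have h23 : (2:ℝ) ^ (β-2) = 2 ^ (β-3) * 2 := by
      rw [← Real.rpow_add_one (by norm_num : (2:ℝ) ≠ 0)]
      congr 1; ring
    have hrhs : (2 : ℝ) ^ (β - 3) * β * (β - 1) *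
        min (nrmInf p ^ (β - 2)) (nrmInf pt ^ (β - 2)) * nrm (p - pt) ^ 2 = c / 2 := by
      rw [hminM, hnC, hcdef, h2Mr, h23]
      ring
    rw [ge_iff_le, hrhs, hGpt, hGp, hGpd]
    linarith [htay]
end

section
/- For β ≥ 2 there exists a constant c > 0 such that for all x, for all q, q̃, r ∈ ℝ⁴ and all η > 0: |(g_q(x,q̃) − g_q(x,q))·r| ≤ max(|p|^{β−2}, |p̃|^{β−2}) · ((c/η)|p − p̃|² + η|r|²), where p = (q₁⁻,q₂⁺,q₃⁻,q₄⁺), p̃ = (q̃₁⁻,q̃₂⁺,q̃₃⁻,q̃₄⁺). -/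
open Real Finset

/- ### Auxiliary lemmas -/

lemma le_of_sq_le' (a b : ℝ) (h : a^2 ≤ b^2) (hb : 0 ≤ b) : a ≤ b := by
  nlinarith [sq_nonneg (a-b), sq_nonneg (a+b)]

lemma cs4 (a0 a1 a2 a3 b0 b1 b2 b3 : ℝ) :
    (a0*b0+a1*b1+a2*b2+a3*b3)^2 ≤ (a0^2+a1^2+a2^2+a3^2)*(b0^2+b1^2+b2^2+b3^2) := by
  nlinarith [sq_nonneg (a0*b1-a1*b0), sq_nonneg (a0*b2-a2*b0), sq_nonneg (a0*b3-a3*b0),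
    sq_nonneg (a1*b2-a2*b1), sq_nonneg (a1*b3-a3*b1), sq_nonneg (a2*b3-a3*b2)]

lemma nrm_nonneg (p : Fin 4 → ℝ) : 0 ≤ nrm p := by
  apply Real.rpow_nonneg
  positivity

lemma sq_nrm (p : Fin 4 → ℝ) : nrm p ^ 2 = p 0 ^2 + p 1 ^2 + p 2 ^2 + p 3 ^2 := by
  have h : (0:ℝ) ≤ ∑ i, p i ^ 2 := by positivity
  rw [nrm, ← Real.rpow_natCast (_ ^ ((1:ℝ)/2)) 2, ← Real.rpow_mul h]
  norm_num [Fin.sum_univ_four]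

lemma abs_le_of_sq (s t : ℝ) (h : s^2 ≤ t^2) (ht : 0 ≤ t) : |s| ≤ t := by
  rw [← Real.sqrt_sq ht, ← Real.sqrt_sq_eq_abs]
  exact Real.sqrt_le_sqrt h

lemma abs_S_le (p r : Fin 4 → ℝ) :
    |(-(p 0) * r 0 + p 1 * r 1 - p 2 * r 2 + p 3 * r 3)| ≤ nrm p * nrm r := by
  apply abs_le_of_sq
  · have := cs4 (-(p 0)) (p 1) (-(p 2)) (p 3) (r 0) (r 1) (r 2) (r 3)
    calc (-(p 0) * r 0 + p 1 * r 1 - p 2 * r 2 + p 3 * r 3)^2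
        = ((-(p 0))*(r 0)+(p 1)*(r 1)+(-(p 2))*(r 2)+(p 3)*(r 3))^2 := by ring
      _ ≤ ((-(p 0))^2+(p 1)^2+(-(p 2))^2+(p 3)^2)*((r 0)^2+(r 1)^2+(r 2)^2+(r 3)^2) := this
      _ = (nrm p * nrm r)^2 := by rw [mul_pow, sq_nrm, sq_nrm]; ring
  · exact mul_nonneg (nrm_nonneg p) (nrm_nonneg r)

lemma abs_dot_le (p r : Fin 4 → ℝ) :
    |(p 0 * r 0 + p 1 * r 1 + p 2 * r 2 + p 3 * r 3)| ≤ nrm p * nrm r := by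
  apply abs_le_of_sq
  · calc (p 0 * r 0 + p 1 * r 1 + p 2 * r 2 + p 3 * r 3)^2
        ≤ ((p 0)^2+(p 1)^2+(p 2)^2+(p 3)^2)*((r 0)^2+(r 1)^2+(r 2)^2+(r 3)^2) :=
          cs4 _ _ _ _ _ _ _ _
      _ = (nrm p * nrm r)^2 := by rw [mul_pow, sq_nrm, sq_nrm]
  · exact mul_nonneg (nrm_nonneg p) (nrm_nonneg r)

lemma nrm_add_le (x y : Fin 4 → ℝ) : nrm (x + y) ≤ nrm x + nrm y := by
  apply le_of_sq_le' _ _ _ (add_nonneg (nrm_nonneg x) (nrm_nonneg y))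
  have hd : x 0 * y 0 + x 1 * y 1 + x 2 * y 2 + x 3 * y 3 ≤ nrm x * nrm y :=
    le_trans (le_abs_self _) (abs_dot_le x y)
  have h1 := sq_nrm (x + y)
  simp only [Pi.add_apply] at h1
  rw [h1]
  have h2 := sq_nrm x
  have h3 := sq_nrm y
  nlinarith [hd]

lemma nrm_sub_comm (x y : Fin 4 → ℝ) : nrm (x - y) = nrm (y - x) := by
  unfold nrm
  congr 1
  apply Finset.sum_congr rfl
  intro i _
  simp only [Pi.sub_apply]
  ring

lemma abs_nrm_sub_le (x y : Fin 4 → ℝ) : |nrm x - nrm y| ≤ nrm (x - y) := by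
  rw [abs_sub_le_iff]
  constructor
  · have := nrm_add_le (x - y) y
    rw [sub_add_cancel] at this
    linarith
  · have := nrm_add_le (y - x) x
    rw [sub_add_cancel] at this
    rw [nrm_sub_comm]
    linarith

lemma key_rpow (γ a b : ℝ) (hγ : 0 ≤ γ) (hb : 0 ≤ b) (hba : b ≤ a) :
    (a ^ γ - b ^ γ) * b ≤ γ * a ^ γ * (a - b) := by
  have ha : 0 ≤ a := le_trans hb hba
  rcases eq_or_lt_of_le hb with rfl | hb'
  · simp only [mul_zero, sub_zero]
    positivity
  have ha' : 0 < a := lt_of_lt_of_le hb' hba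
  have haγ : 0 < a ^ γ := Real.rpow_pos_of_pos ha' γ
  have hbγ : 0 < b ^ γ := Real.rpow_pos_of_pos hb' γ
  have hbγa : b ^ γ ≤ a ^ γ := Real.rpow_le_rpow hb hba hγ
  rcases le_or_gt γ 1 with hγ1 | hγ1
  · have hs : (-1 : ℝ) ≤ (a - b)/b := by
      have : (0:ℝ) ≤ (a-b)/b := div_nonneg (by linarith) hb
      linarith
    have hber := rpow_one_add_le_one_add_mul_self hs hγ hγ1
    have h1 : (1 : ℝ) + (a - b)/b = a / b := by field_simp; ring
    rw [h1, Real.div_rpow ha hb] at hber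
    have h2 := mul_le_mul_of_nonneg_right hber (le_of_lt (mul_pos hbγ hb'))
    have h3 : a ^ γ / b ^ γ * (b ^ γ * b) = a ^ γ * b := by field_simp
    have h4 : (1 + γ * ((a - b)/b)) * (b ^ γ * b) = b ^ γ * b + γ * (a-b) * b ^ γ := by
      field_simp
    rw [h3, h4] at h2
    nlinarith [mul_le_mul_of_nonneg_left hbγa (mul_nonneg hγ (by linarith : (0:ℝ) ≤ a - b))]
  · have hs : (-1 : ℝ) ≤ (b - a)/a := by
      rw [le_div_iff₀ ha']
      linarith
    have hber := one_add_mul_self_le_rpow_one_add hs (le_of_lt hγ1)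
    have h1 : (1 : ℝ) + (b - a)/a = b / a := by field_simp; ring
    rw [h1, Real.div_rpow hb ha] at hber
    have h2 := mul_le_mul_of_nonneg_right hber (le_of_lt (mul_pos haγ ha'))
    have h3 : b ^ γ / a ^ γ * (a ^ γ * a) = b ^ γ * a := by field_simp
    have h4 : (1 + γ * ((b - a)/a)) * (a ^ γ * a) = a ^ γ * a + γ * (b-a) * a ^ γ := by
      field_simp
    rw [h3, h4] at h2
    nlinarith [mul_le_mul_of_nonneg_left hba (by linarith : (0:ℝ) ≤ a ^ γ - b ^ γ)]

/-- The core estimate, assuming `|pvec q| ≤ |pvec qt|`. -/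
lemma gq_core (β : ℝ) (hβ : 2 ≤ β) (q qt r : Fin 4 → ℝ)
    (h : nrm (pvec q) ≤ nrm (pvec qt)) :
    |gq β qt r - gq β q r|
      ≤ β * (β - 1) * (max (nrm (pvec q) ^ (β - 2)) (nrm (pvec qt) ^ (β - 2))
          * (nrm (pvec q - pvec qt) * nrm r)) := by
  set p := pvec q with hp
  set pt := pvec qt with hpt
  have hγ : (0:ℝ) ≤ β - 2 := by linarith
  have hβ0 : (0:ℝ) ≤ β := by linarith
  have haN : 0 ≤ nrm pt := nrm_nonneg pt
  have hbN : 0 ≤ nrm p := nrm_nonneg p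
  have hRN : 0 ≤ nrm r := nrm_nonneg r
  have hDN : 0 ≤ nrm (p - pt) := nrm_nonneg _
  have hba : nrm p ^ (β-2) ≤ nrm pt ^ (β-2) := Real.rpow_le_rpow hbN h hγ
  have haγN : 0 ≤ nrm pt ^ (β-2) := Real.rpow_nonneg haN _
  rw [max_eq_right hba]
  have habD : nrm pt - nrm p ≤ nrm (p - pt) := by
    have h1 := abs_nrm_sub_le pt p
    rw [nrm_sub_comm pt p] at h1
    calc nrm pt - nrm p ≤ |nrm pt - nrm p| := le_abs_self _
      _ ≤ nrm (p - pt) := h1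
  have e1 : |(-(pt 0 - p 0) * r 0 + (pt 1 - p 1) * r 1 - (pt 2 - p 2) * r 2
      + (pt 3 - p 3) * r 3)| ≤ nrm (p - pt) * nrm r := by
    have h1 := abs_S_le (pt - p) r
    simp only [Pi.sub_apply] at h1
    rwa [nrm_sub_comm pt p] at h1
  have e2 : |(-(p 0) * r 0 + p 1 * r 1 - p 2 * r 2 + p 3 * r 3)| ≤ nrm p * nrm r :=
    abs_S_le p r
  have hkey := key_rpow (β-2) (nrm pt) (nrm p) hγ hbN h
  have hΔ : gq β qt r - gq β q r
      = β * nrm pt ^ (β-2) * (-(pt 0 - p 0) * r 0 + (pt 1 - p 1) * r 1 - (pt 2 - p 2) * r 2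
          + (pt 3 - p 3) * r 3)
        + β * (nrm pt ^ (β-2) - nrm p ^ (β-2))
            * (-(p 0) * r 0 + p 1 * r 1 - p 2 * r 2 + p 3 * r 3) := by
    simp only [gq, ← hp, ← hpt]
    ring
  rw [hΔ]
  have t1 : |β * nrm pt ^ (β-2) * (-(pt 0 - p 0) * r 0 + (pt 1 - p 1) * r 1
      - (pt 2 - p 2) * r 2 + (pt 3 - p 3) * r 3)|
      ≤ β * nrm pt ^ (β-2) * (nrm (p - pt) * nrm r) := by
    rw [abs_mul, abs_mul, abs_of_nonneg hβ0, abs_of_nonneg haγN]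
    exact mul_le_mul_of_nonneg_left e1 (by positivity)
  have t2 : |β * (nrm pt ^ (β-2) - nrm p ^ (β-2))
      * (-(p 0) * r 0 + p 1 * r 1 - p 2 * r 2 + p 3 * r 3)|
      ≤ β * ((nrm pt ^ (β-2) - nrm p ^ (β-2)) * (nrm p * nrm r)) := by
    rw [abs_mul, abs_mul, abs_of_nonneg hβ0, abs_of_nonneg (sub_nonneg.2 hba), mul_assoc]
    refine mul_le_mul_of_nonneg_left ?_ hβ0
    exact mul_le_mul_of_nonneg_left e2 (sub_nonneg.2 hba)
  calc |β * nrm pt ^ (β-2) * (-(pt 0 - p 0) * r 0 + (pt 1 - p 1) * r 1 - (pt 2 - p 2) * r 2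
          + (pt 3 - p 3) * r 3)
        + β * (nrm pt ^ (β-2) - nrm p ^ (β-2))
            * (-(p 0) * r 0 + p 1 * r 1 - p 2 * r 2 + p 3 * r 3)|
      ≤ |β * nrm pt ^ (β-2) * (-(pt 0 - p 0) * r 0 + (pt 1 - p 1) * r 1 - (pt 2 - p 2) * r 2
          + (pt 3 - p 3) * r 3)|
        + |β * (nrm pt ^ (β-2) - nrm p ^ (β-2))
            * (-(p 0) * r 0 + p 1 * r 1 - p 2 * r 2 + p 3 * r 3)| := abs_add_le _ _
    _ ≤ β * nrm pt ^ (β-2) * (nrm (p - pt) * nrm r)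
        + β * ((nrm pt ^ (β-2) - nrm p ^ (β-2)) * (nrm p * nrm r)) := add_le_add t1 t2
    _ ≤ β * (β - 1) * (nrm pt ^ (β-2) * (nrm (p - pt) * nrm r)) := by
      nlinarith [mul_le_mul_of_nonneg_right hkey hRN,
        mul_le_mul_of_nonneg_left habD (mul_nonneg hγ haγN),
        mul_nonneg (mul_nonneg hγ haγN) hRN,
        mul_le_mul_of_nonneg_right
          (mul_le_mul_of_nonneg_left habD (mul_nonneg hγ haγN)) hRN]

/-- Lemma 3.4: for `β ≥ 2` there exists `c > 0` such that for all `x`, `q, qt, r ∈ ℝ⁴`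
and all `η > 0`:
`|(g_q(x,qt) − g_q(x,q))·r| ≤ max(|p|^(β−2), |pt|^(β−2)) ((c/η)|p − pt|² + η|r|²)`. -/
theorem gq_diff_bound (β : ℝ) (hβ : 2 ≤ β) :
    ∃ c > (0 : ℝ), ∀ (x : ℝ × ℝ) (q qt r : Fin 4 → ℝ) (η : ℝ), 0 < η →
      |gq β qt r - gq β q r|
        ≤ max (nrm (pvec q) ^ (β - 2)) (nrm (pvec qt) ^ (β - 2)) *
            (c / η * nrm (pvec q - pvec qt) ^ 2 + η * nrm r ^ 2) := by
  have hc2 : (2:ℝ) ≤ β * (β - 1) := by nlinarith [mul_nonneg (by linarith : (0:ℝ) ≤ β - 2) (by linarith : (0:ℝ) ≤ β + 1)]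
  refine ⟨(β * (β - 1))^2 / 4, by nlinarith [sq_nonneg (β * (β - 1) - 2)], ?_⟩
  intro x q qt r η hη
  have hcore : |gq β qt r - gq β q r|
      ≤ β * (β - 1) * (max (nrm (pvec q) ^ (β - 2)) (nrm (pvec qt) ^ (β - 2))
          * (nrm (pvec q - pvec qt) * nrm r)) := by
    rcases le_total (nrm (pvec q)) (nrm (pvec qt)) with h | h
    · exact gq_core β hβ q qt r h
    · have h1 := gq_core β hβ qt q r h
      rw [abs_sub_comm, nrm_sub_comm (pvec qt) (pvec q), max_comm] at h1
      exact h1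
  have hMN : 0 ≤ max (nrm (pvec q) ^ (β - 2)) (nrm (pvec qt) ^ (β - 2)) :=
    le_trans (Real.rpow_nonneg (nrm_nonneg _) _) (le_max_left _ _)
  have hDN : 0 ≤ nrm (pvec q - pvec qt) := nrm_nonneg _
  have hRN : 0 ≤ nrm r := nrm_nonneg r
  have hq : β * (β - 1) * (nrm (pvec q - pvec qt) * nrm r)
      ≤ (β * (β - 1))^2 / 4 / η * nrm (pvec q - pvec qt) ^ 2 + η * nrm r ^ 2 := by
    have h1 : (β * (β - 1))^2 / 4 / η * nrm (pvec q - pvec qt) ^ 2 + η * nrm r ^ 2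
        - β * (β - 1) * (nrm (pvec q - pvec qt) * nrm r)
        = (β * (β - 1) * nrm (pvec q - pvec qt) - 2 * η * nrm r)^2 / (4 * η) := by
      field_simp
      ring
    nlinarith [sq_nonneg (β * (β - 1) * nrm (pvec q - pvec qt) - 2 * η * nrm r),
      div_nonneg (sq_nonneg (β * (β - 1) * nrm (pvec q - pvec qt) - 2 * η * nrm r))
        (by linarith : (0:ℝ) ≤ 4 * η)]
  calc |gq β qt r - gq β q r|
      ≤ β * (β - 1) * (max (nrm (pvec q) ^ (β - 2)) (nrm (pvec qt) ^ (β - 2))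
          * (nrm (pvec q - pvec qt) * nrm r)) := hcore
    _ = max (nrm (pvec q) ^ (β - 2)) (nrm (pvec qt) ^ (β - 2))
          * (β * (β - 1) * (nrm (pvec q - pvec qt) * nrm r)) := by ring
    _ ≤ max (nrm (pvec q) ^ (β - 2)) (nrm (pvec qt) ^ (β - 2)) *
            ((β * (β - 1))^2 / 4 / η * nrm (pvec q - pvec qt) ^ 2 + η * nrm r ^ 2) :=
      mul_le_mul_of_nonneg_left hq hMN
end

section
/- For 1 < β < 2 and m bounded below by m̲ > 0, the functional 𝒢(m, 0, u) ≥ 2^{2β−6} β(β−1) m̲ ∑_{n=1}^{N_T} ∑_{i,j} |[D_h uⁿ]_{i,j}|^β. -/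
open Real Finset

variable {Nh : ℕ}

/-- `[D_h u]_{i,j}`: the four one-sided finite differences at `(i,j)` on the periodic grid. -/
noncomputable def Dh (h : ℝ) (u : ZMod Nh → ZMod Nh → ℝ) (i j : ZMod Nh) : Fin 4 → ℝ :=
  ![(u (i + 1) j - u i j) / h, (u i j - u (i - 1) j) / h,
    (u i (j + 1) - u i j) / h, (u i j - u i (j - 1)) / h]

/-- The discrete functional
`𝒢(m,u,ũ) = ∑_{n=1}^{N_T} ∑_{i,j} m^{n−1}_{i,j} (g(x_{ij},[Dũⁿ]) − g(x_{ij},[Duⁿ])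
 − g_q(x_{ij},[Duⁿ])·([Dũⁿ]−[Duⁿ]))`, where `g(x_{ij},q) = H_{ij} + G(pvec q)`. -/
noncomputable def Gcal [NeZero Nh] (β : ℝ) (NT : ℕ) (h : ℝ) (Hgrid : ZMod Nh → ZMod Nh → ℝ)
    (m u ut : ℕ → ZMod Nh → ZMod Nh → ℝ) : ℝ :=
  ∑ n ∈ Finset.Icc 1 NT, ∑ i : ZMod Nh, ∑ j : ZMod Nh,
    m (n - 1) i j *
      ((Hgrid i j + Gfun β (pvec (Dh h (ut n) i j)))
        - (Hgrid i j + Gfun β (pvec (Dh h (u n) i j)))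
        - gq β (Dh h (u n) i j) (Dh h (ut n) i j - Dh h (u n) i j))

/- ### Auxiliary lemmas -/

lemma rpow_add_le' {p : ℝ} (hp0 : 0 ≤ p) (hp1 : p ≤ 1) {a b : ℝ} (ha : 0 ≤ a) (hb : 0 ≤ b) :
    (a + b) ^ p ≤ a ^ p + b ^ p := by
  have h := NNReal.coe_le_coe.2 (NNReal.rpow_add_le_add_rpow a.toNNReal b.toNNReal hp0 hp1)
  push_cast at h
  rwa [Real.coe_toNNReal a ha, Real.coe_toNNReal b hb] at h

lemma sum4_rpow_le {p : ℝ} (hp0 : 0 ≤ p) (hp1 : p ≤ 1) (x : Fin 4 → ℝ) (hx : ∀ k, 0 ≤ x k) :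
    (∑ k, x k) ^ p ≤ ∑ k, x k ^ p := by
  rw [Fin.sum_univ_four, Fin.sum_univ_four]
  calc (x 0 + x 1 + x 2 + x 3) ^ p ≤ (x 0 + x 1 + x 2) ^ p + x 3 ^ p := by
        exact rpow_add_le' hp0 hp1 (add_nonneg (add_nonneg (hx 0) (hx 1)) (hx 2)) (hx 3)
    _ ≤ ((x 0 + x 1) ^ p + x 2 ^ p) + x 3 ^ p := by
        gcongr; exact rpow_add_le' hp0 hp1 (add_nonneg (hx 0) (hx 1)) (hx 2)
    _ ≤ ((x 0 ^ p + x 1 ^ p) + x 2 ^ p) + x 3 ^ p := by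
        gcongr; exact rpow_add_le' hp0 hp1 (hx 0) (hx 1)
    _ = x 0 ^ p + x 1 ^ p + x 2 ^ p + x 3 ^ p := by ring

lemma sum4_rpow_ge {p : ℝ} (hp0 : 0 < p) (hp1 : p ≤ 1) (x : Fin 4 → ℝ) (hx : ∀ k, 0 ≤ x k) :
    ∑ k, x k ^ p ≤ (4:ℝ) ^ (1 - p) * (∑ k, x k) ^ p := by
  have hp1' : 1 ≤ 1 / p := by rw [le_div_iff₀ hp0]; linarith
  have key := Real.rpow_arith_mean_le_arith_mean_rpow Finset.univ
      (fun _ : Fin 4 => (1/4 : ℝ)) (fun k => x k ^ p)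
      (fun _ _ => by norm_num) (by simp)
      (fun k _ => Real.rpow_nonneg (hx k) p) hp1'
  have hxp : ∀ k : Fin 4, (x k ^ p) ^ (1/p : ℝ) = x k := by
    intro k
    rw [← Real.rpow_mul (hx k), mul_one_div, div_self hp0.ne', Real.rpow_one]
  simp only [hxp] at key
  set A : ℝ := ∑ k, (1/4 : ℝ) * x k ^ p with hA
  have hAnn : 0 ≤ A :=
    Finset.sum_nonneg fun k _ => by have := Real.rpow_nonneg (hx k) p; positivity
  have key2 : A ≤ (∑ k : Fin 4, (1/4 : ℝ) * x k) ^ p := by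
    have h2 := Real.rpow_le_rpow (Real.rpow_nonneg hAnn _) key hp0.le
    rwa [← Real.rpow_mul hAnn, one_div_mul_cancel hp0.ne', Real.rpow_one] at h2
  have e1 : (∑ k : Fin 4, (1/4 : ℝ) * x k) = (1/4 : ℝ) * ∑ k, x k := by
    rw [← Finset.mul_sum]
  have e2 : A = (1/4 : ℝ) * ∑ k, x k ^ p := by rw [hA, ← Finset.mul_sum]
  rw [e1, e2] at key2
  have hsx : 0 ≤ ∑ k, x k := Finset.sum_nonneg fun k _ => hx k
  rw [Real.mul_rpow (by norm_num) hsx] at key2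
  have c4 : (4:ℝ) ^ (1 - p) = 4 * (1/4 : ℝ) ^ p := by
    rw [Real.rpow_sub (by norm_num), Real.rpow_one, one_div,
      Real.inv_rpow (by norm_num)]
    ring
  rw [c4, mul_assoc]
  linarith

lemma sq_rpow_half (β : ℝ) {a : ℝ} (ha : 0 ≤ a) : (a ^ 2 : ℝ) ^ (β / 2 : ℝ) = a ^ β := by
  rw [← Real.rpow_natCast a 2, ← Real.rpow_mul ha]
  congr 1
  ring

/-- `|q|^β ≤ ∑ |q_k|^β` for `0 < β ≤ 2`. -/
lemma nrm_rpow_le_sum {β : ℝ} (hβ0 : 0 < β) (hβ2 : β ≤ 2) (q : Fin 4 → ℝ) :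
    nrm q ^ β ≤ ∑ k, |q k| ^ β := by
  have hs : (0:ℝ) ≤ ∑ k, q k ^ 2 := Finset.sum_nonneg fun k _ => sq_nonneg _
  have e : nrm q ^ β = (∑ k, q k ^ 2) ^ (β / 2 : ℝ) := by
    rw [nrm, ← Real.rpow_mul hs]
    congr 1
    ring
  rw [e]
  have h1 := sum4_rpow_le (p := β/2) (by positivity) (by linarith) (fun k => q k ^ 2)
    (fun k => sq_nonneg _)
  refine h1.trans_eq (Finset.sum_congr rfl fun k _ => ?_)
  rw [← sq_abs, sq_rpow_half β (abs_nonneg _)]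

/-- `∑ p_k^β ≤ 2^(2-β) |p|^β` for nonnegative `p` and `0 < β ≤ 2`. -/
lemma sum_rpow_le_nrm {β : ℝ} (hβ0 : 0 < β) (hβ2 : β ≤ 2) (p : Fin 4 → ℝ)
    (hp : ∀ k, 0 ≤ p k) :
    ∑ k, p k ^ β ≤ 2 ^ ((2:ℝ) - β) * nrm p ^ β := by
  have hs : (0:ℝ) ≤ ∑ k, p k ^ 2 := Finset.sum_nonneg fun k _ => sq_nonneg _
  have e : nrm p ^ β = (∑ k, p k ^ 2) ^ (β / 2 : ℝ) := by
    rw [nrm, ← Real.rpow_mul hs]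
    congr 1
    ring
  have h1 := sum4_rpow_ge (p := β/2) (by positivity) (by linarith) (fun k => p k ^ 2)
    (fun k => sq_nonneg _)
  have e2 : ∀ k : Fin 4, (p k ^ 2 : ℝ) ^ (β / 2 : ℝ) = p k ^ β :=
    fun k => sq_rpow_half β (hp k)
  simp only [e2] at h1
  have c : (4:ℝ) ^ (1 - β/2) = 2 ^ ((2:ℝ) - β) := by
    have : (4:ℝ) = 2 ^ (2:ℝ) := by
      rw [show (2:ℝ) = ((2:ℕ):ℝ) by norm_num, Real.rpow_natCast]; norm_num
    rw [this, ← Real.rpow_mul (by norm_num)]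
    congr 1
    ring
  rw [e, ← c]
  exact h1

lemma shift_left [NeZero Nh] (g : ZMod Nh → ℝ) (c : ZMod Nh) : ∑ i, g (i + c) = ∑ i, g i :=
  Fintype.sum_equiv (Equiv.addRight c) _ _ fun _ => rfl

lemma shift_sub_one [NeZero Nh] (g : ZMod Nh → ℝ) : ∑ i, g (i - 1) = ∑ i, g i := by
  simpa [sub_eq_add_neg] using shift_left g (-1)

lemma abs_rpow_split {β : ℝ} (hβ : 0 < β) (x : ℝ) :
    |x| ^ β = max x 0 ^ β + max (-x) 0 ^ β := by
  rcases le_total 0 x with hx | hx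
  · rw [abs_of_nonneg hx, max_eq_left hx, max_eq_right (by linarith),
      Real.zero_rpow hβ.ne', add_zero]
  · rw [abs_of_nonpos hx, max_eq_right hx, max_eq_left (by linarith),
      Real.zero_rpow hβ.ne', zero_add]

/-- The key grid inequality: summed over the periodic grid, the norm of the
finite-difference vector is controlled by the norm of its upwind part. -/
lemma grid_ineq [NeZero Nh] {β : ℝ} (hβ1 : 1 < β) (hβ2 : β < 2)
    (h : ℝ) (v : ZMod Nh → ZMod Nh → ℝ) :
    ∑ i : ZMod Nh, ∑ j : ZMod Nh, nrm (Dh h v i j) ^ β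
      ≤ 2 ^ ((3:ℝ) - β) * ∑ i : ZMod Nh, ∑ j : ZMod Nh, nrm (pvec (Dh h v i j)) ^ β := by
  have hβ0 : (0:ℝ) < β := by linarith
  set a : ZMod Nh → ZMod Nh → ℝ := fun i j => (v (i+1) j - v i j) / h with ha
  set b : ZMod Nh → ZMod Nh → ℝ := fun i j => (v i (j+1) - v i j) / h with hb
  have hD : ∀ i j, Dh h v i j = ![a i j, a (i-1) j, b i j, b i (j-1)] := by
    intro i j
    funext k
    fin_cases k <;> simp [Dh, ha, hb]
  -- the four absolute values, summed over the grid
  have shift1 : ∀ f : ZMod Nh → ZMod Nh → ℝ,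
      (∑ i : ZMod Nh, ∑ j : ZMod Nh, f (i-1) j) = ∑ i : ZMod Nh, ∑ j : ZMod Nh, f i j :=
    fun f => shift_sub_one (fun i => ∑ j, f i j)
  have shift2 : ∀ f : ZMod Nh → ZMod Nh → ℝ,
      (∑ i : ZMod Nh, ∑ j : ZMod Nh, f i (j-1)) = ∑ i : ZMod Nh, ∑ j : ZMod Nh, f i j :=
    fun f => Finset.sum_congr rfl fun i _ => shift_sub_one (f i)
  -- Step 1: pointwise bound by the sum of absolute values
  have step1 : ∑ i : ZMod Nh, ∑ j : ZMod Nh, nrm (Dh h v i j) ^ β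
      ≤ ∑ i : ZMod Nh, ∑ j : ZMod Nh,
          (|a i j| ^ β + |a (i-1) j| ^ β + |b i j| ^ β + |b i (j-1)| ^ β) := by
    refine Finset.sum_le_sum fun i _ => Finset.sum_le_sum fun j _ => ?_
    rw [hD i j]
    have := nrm_rpow_le_sum hβ0 hβ2.le ![a i j, a (i-1) j, b i j, b i (j-1)]
    rw [Fin.sum_univ_four] at this
    simpa using this
  -- Step 2: the absolute-value sum equals twice the upwind sum
  have step2 : ∑ i : ZMod Nh, ∑ j : ZMod Nh,
        (|a i j| ^ β + |a (i-1) j| ^ β + |b i j| ^ β + |b i (j-1)| ^ β)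
      = 2 * ∑ i : ZMod Nh, ∑ j : ZMod Nh, ∑ k, pvec (Dh h v i j) k ^ β := by
    have expand : ∀ i j : ZMod Nh, (∑ k, pvec (Dh h v i j) k ^ β)
        = max (-(a i j)) 0 ^ β + max (a (i-1) j) 0 ^ β
          + max (-(b i j)) 0 ^ β + max (b i (j-1)) 0 ^ β := by
      intro i j
      rw [Fin.sum_univ_four, hD i j]
      simp [pvec]
    have L : ∑ i : ZMod Nh, ∑ j : ZMod Nh,
          (|a i j| ^ β + |a (i-1) j| ^ β + |b i j| ^ β + |b i (j-1)| ^ β)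
        = 2 * ((∑ i : ZMod Nh, ∑ j : ZMod Nh, |a i j| ^ β)
            + ∑ i : ZMod Nh, ∑ j : ZMod Nh, |b i j| ^ β) := by
      simp only [Finset.sum_add_distrib]
      rw [shift1 (fun i j => |a i j| ^ β), shift2 (fun i j => |b i j| ^ β)]
      ring
    have R : ∑ i : ZMod Nh, ∑ j : ZMod Nh, ∑ k, pvec (Dh h v i j) k ^ β
        = (∑ i : ZMod Nh, ∑ j : ZMod Nh, |a i j| ^ β)
            + ∑ i : ZMod Nh, ∑ j : ZMod Nh, |b i j| ^ β := by
      simp only [expand]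
      simp only [Finset.sum_add_distrib]
      rw [shift1 (fun i j => max (a i j) 0 ^ β), shift2 (fun i j => max (b i j) 0 ^ β)]
      have ea : ∀ i j : ZMod Nh, |a i j| ^ β = max (a i j) 0 ^ β + max (-(a i j)) 0 ^ β :=
        fun i j => abs_rpow_split hβ0 _
      have eb : ∀ i j : ZMod Nh, |b i j| ^ β = max (b i j) 0 ^ β + max (-(b i j)) 0 ^ β :=
        fun i j => abs_rpow_split hβ0 _
      simp only [ea, eb, Finset.sum_add_distrib]
      ring
    rw [L, R]
  -- Step 3: pointwise bound of the upwind sum by the norm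
  have step3 : ∑ i : ZMod Nh, ∑ j : ZMod Nh, ∑ k, pvec (Dh h v i j) k ^ β
      ≤ 2 ^ ((2:ℝ) - β) * ∑ i : ZMod Nh, ∑ j : ZMod Nh, nrm (pvec (Dh h v i j)) ^ β := by
    rw [Finset.mul_sum]
    refine Finset.sum_le_sum fun i _ => ?_
    rw [Finset.mul_sum]
    refine Finset.sum_le_sum fun j _ => ?_
    refine sum_rpow_le_nrm hβ0 hβ2.le _ fun k => ?_
    have : pvec (Dh h v i j) = ![max (-(Dh h v i j 0)) 0, max (Dh h v i j 1) 0,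
        max (-(Dh h v i j 2)) 0, max (Dh h v i j 3) 0] := rfl
    rw [this]
    fin_cases k <;> simp [le_max_right]
  calc ∑ i : ZMod Nh, ∑ j : ZMod Nh, nrm (Dh h v i j) ^ β
      ≤ 2 * ∑ i : ZMod Nh, ∑ j : ZMod Nh, ∑ k, pvec (Dh h v i j) k ^ β := by
        rw [← step2]; exact step1
    _ ≤ 2 * (2 ^ ((2:ℝ) - β) * ∑ i : ZMod Nh, ∑ j : ZMod Nh, nrm (pvec (Dh h v i j)) ^ β) := by
        linarith
    _ = 2 ^ ((3:ℝ) - β) * ∑ i : ZMod Nh, ∑ j : ZMod Nh, nrm (pvec (Dh h v i j)) ^ β := by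
        rw [← mul_assoc]
        congr 1
        rw [show (3:ℝ) - β = 1 + (2 - β) by ring, Real.rpow_add (by norm_num),
          Real.rpow_one]

/-- For `1 < β < 2` and `m` bounded below by `m̲ > 0`:
`𝒢(m,0,u) ≥ 2^(2β−6) β(β−1) m̲ ∑_{n=1}^{N_T} ∑_{i,j} |[D_h uⁿ]_{i,j}|^β`. -/
theorem Gcal_zero_lower_bound [NeZero Nh] (β : ℝ) (hβ₁ : 1 < β) (hβ₂ : β < 2)
    (NT : ℕ) (h : ℝ) (hh : 0 < h)
    (Hgrid : ZMod Nh → ZMod Nh → ℝ) (m u : ℕ → ZMod Nh → ZMod Nh → ℝ)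
    (mlow : ℝ) (hmlow : 0 < mlow) (hm : ∀ n i j, mlow ≤ m n i j) :
    Gcal β NT h Hgrid m (fun _ _ _ => 0) u
      ≥ (2 : ℝ) ^ (2 * β - 6) * β * (β - 1) * mlow *
          ∑ n ∈ Finset.Icc 1 NT, ∑ i : ZMod Nh, ∑ j : ZMod Nh,
            nrm (Dh h (u n) i j) ^ β := by
  have hβ0 : (0:ℝ) < β := by linarith
  -- zero function facts
  have hD0 : ∀ i j : ZMod Nh, Dh h (fun _ _ => (0:ℝ)) i j = fun _ => 0 := by
    intro i j
    funext k
    fin_cases k <;> simp [Dh]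
  have hpvec0 : pvec (fun _ => (0:ℝ)) = fun _ => 0 := by
    funext k
    fin_cases k <;> simp [pvec]
  have hnrm0 : nrm (fun _ => (0:ℝ)) = 0 := by
    rw [nrm]
    norm_num
  have hG0 : Gfun β (pvec (fun _ => (0:ℝ))) = 0 := by
    rw [Gfun, hpvec0, hnrm0, Real.zero_rpow hβ0.ne']
  have hgq0 : ∀ r : Fin 4 → ℝ, gq β (fun _ => (0:ℝ)) r = 0 := by
    intro r
    rw [gq, hpvec0]
    norm_num
  -- Gcal simplification
  have hGcal : Gcal β NT h Hgrid m (fun _ _ _ => 0) u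
      = ∑ n ∈ Finset.Icc 1 NT, ∑ i : ZMod Nh, ∑ j : ZMod Nh,
          m (n-1) i j * nrm (pvec (Dh h (u n) i j)) ^ β := by
    rw [Gcal]
    refine Finset.sum_congr rfl fun n _ => Finset.sum_congr rfl fun i _ =>
      Finset.sum_congr rfl fun j _ => ?_
    rw [hD0 i j, hG0, hgq0]
    rw [Gfun]
    ring
  rw [hGcal, ge_iff_le]
  -- nonnegativity helpers
  have hnp : ∀ (n : ℕ) (i j : ZMod Nh), (0:ℝ) ≤ nrm (pvec (Dh h (u n) i j)) ^ β := by
    intro n i j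
    exact Real.rpow_nonneg (Real.rpow_nonneg (Finset.sum_nonneg fun k _ => sq_nonneg _) _) β
  have hnq : ∀ (n : ℕ) (i j : ZMod Nh), (0:ℝ) ≤ nrm (Dh h (u n) i j) ^ β := by
    intro n i j
    exact Real.rpow_nonneg (Real.rpow_nonneg (Finset.sum_nonneg fun k _ => sq_nonneg _) _) β
  -- constant comparison : 2^(2β-6) β (β-1) ≤ 2^(β-3)
  have hconst : (2:ℝ) ^ (2*β - 6) * β * (β - 1) ≤ 2 ^ (β - 3) := by
    have e : (2:ℝ) ^ (2*β - 6) = 2 ^ (β - 3) * 2 ^ (β - 3) := by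
      rw [← Real.rpow_add (by norm_num)]
      congr 1
      ring
    rw [e]
    have h1 : (2:ℝ) ^ (β - 3) ≤ 2 ^ ((-1:ℝ)) := by
      apply Real.rpow_le_rpow_left_iff (by norm_num : (1:ℝ) < 2) |>.2
      linarith
    have h2 : (2:ℝ) ^ ((-1:ℝ)) = 1/2 := by
      rw [Real.rpow_neg_one]
      norm_num
    have h3 : (0:ℝ) < 2 ^ (β - 3) := Real.rpow_pos_of_pos (by norm_num) _
    have h4 : β * (β - 1) ≤ 2 := by nlinarith
    have h5 : (0:ℝ) ≤ β * (β - 1) := by nlinarith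
    calc (2:ℝ) ^ (β - 3) * 2 ^ (β - 3) * β * (β - 1)
        = 2 ^ (β - 3) * (2 ^ (β - 3) * (β * (β - 1))) := by ring
      _ ≤ 2 ^ (β - 3) * ((1/2) * 2) := by
          apply mul_le_mul_of_nonneg_left _ h3.le
          calc (2:ℝ) ^ (β - 3) * (β * (β - 1)) ≤ (1/2) * (β * (β - 1)) := by
                apply mul_le_mul_of_nonneg_right _ h5
                rw [← h2]; exact h1
            _ ≤ (1/2) * 2 := by linarith
      _ = 2 ^ (β - 3) * 1 := by norm_num
      _ = 2 ^ (β - 3) := mul_one _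
  -- main chain
  have hgrid : ∀ n : ℕ,
      2 ^ (β - 3) * (∑ i : ZMod Nh, ∑ j : ZMod Nh, nrm (Dh h (u n) i j) ^ β)
        ≤ ∑ i : ZMod Nh, ∑ j : ZMod Nh, nrm (pvec (Dh h (u n) i j)) ^ β := by
    intro n
    have hg := grid_ineq hβ₁ hβ₂ h (u n)
    have h3 : (0:ℝ) < 2 ^ (β - 3) := Real.rpow_pos_of_pos (by norm_num) _
    have e : (2:ℝ) ^ (β - 3) * 2 ^ ((3:ℝ) - β) = 1 := by
      rw [← Real.rpow_add (by norm_num)]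
      norm_num
    calc 2 ^ (β - 3) * (∑ i : ZMod Nh, ∑ j : ZMod Nh, nrm (Dh h (u n) i j) ^ β)
        ≤ 2 ^ (β - 3) * (2 ^ ((3:ℝ) - β) *
            ∑ i : ZMod Nh, ∑ j : ZMod Nh, nrm (pvec (Dh h (u n) i j)) ^ β) :=
          mul_le_mul_of_nonneg_left hg h3.le
      _ = ∑ i : ZMod Nh, ∑ j : ZMod Nh, nrm (pvec (Dh h (u n) i j)) ^ β := by
          rw [← mul_assoc, e, one_mul]
  calc (2 : ℝ) ^ (2 * β - 6) * β * (β - 1) * mlow *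
          ∑ n ∈ Finset.Icc 1 NT, ∑ i : ZMod Nh, ∑ j : ZMod Nh, nrm (Dh h (u n) i j) ^ β
      ≤ 2 ^ (β - 3) * mlow *
          ∑ n ∈ Finset.Icc 1 NT, ∑ i : ZMod Nh, ∑ j : ZMod Nh, nrm (Dh h (u n) i j) ^ β := by
        apply mul_le_mul_of_nonneg_right _
          (Finset.sum_nonneg fun n _ => Finset.sum_nonneg fun i _ =>
            Finset.sum_nonneg fun j _ => hnq n i j)
        exact mul_le_mul_of_nonneg_right hconst hmlow.le
    _ = ∑ n ∈ Finset.Icc 1 NT, mlow *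
          (2 ^ (β - 3) * ∑ i : ZMod Nh, ∑ j : ZMod Nh, nrm (Dh h (u n) i j) ^ β) := by
        rw [← Finset.mul_sum]
        rw [Finset.mul_sum, Finset.mul_sum]
        refine Finset.sum_congr rfl fun n _ => ?_
        ring
    _ ≤ ∑ n ∈ Finset.Icc 1 NT, mlow *
          (∑ i : ZMod Nh, ∑ j : ZMod Nh, nrm (pvec (Dh h (u n) i j)) ^ β) := by
        refine Finset.sum_le_sum fun n _ => ?_
        exact mul_le_mul_of_nonneg_left (hgrid n) hmlow.le
    _ ≤ ∑ n ∈ Finset.Icc 1 NT, ∑ i : ZMod Nh, ∑ j : ZMod Nh,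
          m (n-1) i j * nrm (pvec (Dh h (u n) i j)) ^ β := by
        refine Finset.sum_le_sum fun n _ => ?_
        rw [Finset.mul_sum]
        refine Finset.sum_le_sum fun i _ => ?_
        rw [Finset.mul_sum]
        refine Finset.sum_le_sum fun j _ => ?_
        exact mul_le_mul_of_nonneg_right (hm (n-1) i j) (hnp n i j)
end
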